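/- Let \(n\) and \(\rho<n/2\) be positive integers, \(k=\lfloor n/2\rfloor\), and let \(s_{1},\ldots,s_{k}\) be nonnegative real numbers with \(s_{1}+\cdots+s_{k}\le\rho\). Then there exist nonnegative real numbers \(s_{1}',\ldots,s_{k}'\) such that: (i) \(s_{1}'+\cdots+s_{k}'\le\rho\); (ii) \(s_{i}'=0\) for all \(i<\rho\); (iii) \(\sum_{i=1}^{\tau} i\,s_{i}'\le \tau^{2}/4\) for all \(\tau\in\{\rho,\ldots,k\}\); and (iv) \(\varphi(s_{1}',\ldots,s_{k}')\ge\varphi(s_{1},\ldots,s_{k})\). -/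

import Mathlib

/-- The function `φ(s₁, …, s_k) = ∑_{r=ρ}^{k} min{r²/4, ∑_{i=1}^{r} i·sᵢ}`. -/
noncomputable def phi (ρ k : ℕ) (s : ℕ → ℝ) : ℝ :=
  ∑ r ∈ Finset.Icc ρ k, min ((r : ℝ) ^ 2 / 4) (∑ i ∈ Finset.Icc 1 r, (i : ℝ) * s i)

/-- Claim 1 of the paper: any admissible tuple can be replaced by one in the feasible set
without decreasing `φ`. -/
theorem reduce_to_feasible (n ρ : ℕ) (hn : 0 < n) (hρ : 0 < ρ)
    (hρn : (ρ : ℝ) < (n : ℝ) / 2) (s : ℕ → ℝ)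
    (hnonneg : ∀ i ∈ Finset.Icc 1 (n / 2), 0 ≤ s i)
    (hsum : (∑ i ∈ Finset.Icc 1 (n / 2), s i) ≤ (ρ : ℝ)) :
    ∃ s' : ℕ → ℝ,
      (∀ i ∈ Finset.Icc 1 (n / 2), 0 ≤ s' i) ∧
      (∑ i ∈ Finset.Icc 1 (n / 2), s' i) ≤ (ρ : ℝ) ∧
      (∀ i ∈ Finset.Icc 1 (n / 2), i < ρ → s' i = 0) ∧
      (∀ τ ∈ Finset.Icc ρ (n / 2),
        ∑ i ∈ Finset.Icc 1 τ, (i : ℝ) * s' i ≤ (τ : ℝ) ^ 2 / 4) ∧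
      phi ρ (n / 2) s ≤ phi ρ (n / 2) s' := by
  set k := n / 2 with hk
  have hρk : ρ ≤ k := by
    have h2 : (2 * ρ : ℝ) < n := by linarith
    have : 2 * ρ < n := by exact_mod_cast h2
    omega
  -- the shifted mass function
  set g : ℕ → ℝ := fun r =>
    (ρ : ℝ) * (∑ i ∈ Finset.Icc 1 ρ, s i) + ∑ i ∈ Finset.Icc (ρ + 1) r, (i : ℝ) * s i with hgdef
  set t : ℕ → ℝ := fun r => min ((r : ℝ) ^ 2 / 4) (g r) with htdef
  set s' : ℕ → ℝ := fun i =>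
    if i < ρ then 0 else if i = ρ then t ρ / ρ else (t i - t (i - 1)) / i with hs'def
  have hρR : (0 : ℝ) < ρ := by exact_mod_cast hρ
  -- g step
  have hgstep : ∀ r, ρ ≤ r → g (r + 1) = g r + (r + 1 : ℕ) * s (r + 1) := by
    intro r hr
    simp only [hgdef]
    rw [Finset.sum_Icc_succ_top (by omega : ρ + 1 ≤ r + 1)]
    ring
  have hsnn : ∀ i, 1 ≤ i → i ≤ k → 0 ≤ s i := by
    intro i h1 h2; exact hnonneg i (Finset.mem_Icc.mpr ⟨h1, h2⟩)
  have hgmono : ∀ r, ρ ≤ r → r + 1 ≤ k → g r ≤ g (r + 1) := by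
    intro r hr hrk
    rw [hgstep r hr]
    have := hsnn (r + 1) (by omega) hrk
    have : (0:ℝ) ≤ (r + 1 : ℕ) * s (r + 1) := by positivity
    linarith
  have htmono : ∀ r, ρ ≤ r → r + 1 ≤ k → t r ≤ t (r + 1) := by
    intro r hr hrk
    have h1 : ((r : ℝ)) ^ 2 / 4 ≤ ((r + 1 : ℕ) : ℝ) ^ 2 / 4 := by
      push_cast; nlinarith [Nat.cast_nonneg (α := ℝ) r]
    exact min_le_min h1 (hgmono r hr hrk)
  have htg : ∀ r, t r ≤ g r := fun r => min_le_right _ _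
  have hg0 : 0 ≤ g ρ := by
    simp only [hgdef]
    rw [Finset.Icc_eq_empty (by omega : ¬ ρ + 1 ≤ ρ)]
    simp only [Finset.sum_empty, add_zero]
    have : 0 ≤ ∑ i ∈ Finset.Icc 1 ρ, s i :=
      Finset.sum_nonneg fun i hi => by
        rw [Finset.mem_Icc] at hi; exact hsnn i hi.1 (le_trans hi.2 hρk)
    positivity
  have ht0 : 0 ≤ t ρ := le_min (by positivity) hg0
  -- s' values
  have hs'lt : ∀ i, i < ρ → s' i = 0 := by
    intro i hi; simp only [hs'def, if_pos hi]
  have hs'ρ : s' ρ = t ρ / ρ := by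
    simp [hs'def]
  have hs'gt : ∀ i, ρ < i → s' i = (t i - t (i - 1)) / i := by
    intro i hi
    simp only [hs'def, if_neg (by omega : ¬ i < ρ), if_neg (by omega : i ≠ ρ)]
  -- nonnegativity of s' on [1,k]
  have hs'nn : ∀ i, i ≤ k → 0 ≤ s' i := by
    intro i hik
    rcases lt_trichotomy i ρ with h | h | h
    · rw [hs'lt i h]
    · subst h; rw [hs'ρ]; positivity
    · rw [hs'gt i h]
      obtain ⟨j, rfl⟩ : ∃ j, i = j + 1 := ⟨i - 1, by omega⟩
      have := htmono j (by omega) hik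
      simp only [Nat.add_sub_cancel]
      have hipos : (0:ℝ) < ((j+1 : ℕ) : ℝ) := by positivity
      apply div_nonneg (by linarith) (le_of_lt hipos)
  -- telescoping sum for s'
  have hA' : ∀ r, ρ ≤ r → r ≤ k → ∑ i ∈ Finset.Icc 1 r, (i : ℝ) * s' i = t r := by
    intro r hr
    induction r, hr using Nat.le_induction with
    | base =>
      intro _
      have hsplit : ∑ i ∈ Finset.Icc 1 ρ, (i : ℝ) * s' i
          = ∑ i ∈ Finset.Icc 1 (ρ - 1), (i : ℝ) * s' i + (ρ : ℝ) * s' ρ := by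
        obtain ⟨m, rfl⟩ : ∃ m, ρ = m + 1 := ⟨ρ - 1, by omega⟩
        rw [Finset.sum_Icc_succ_top (by omega : 1 ≤ m + 1)]
        simp
      rw [hsplit, Finset.sum_eq_zero, hs'ρ]
      · field_simp
        ring
      · intro i hi
        rw [Finset.mem_Icc] at hi
        rw [hs'lt i (by omega)]; ring
    | succ r hr ih =>
      intro hrk
      rw [Finset.sum_Icc_succ_top (by omega : 1 ≤ r + 1), ih (by omega),
        hs'gt (r + 1) (by omega)]
      simp only [Nat.add_sub_cancel]
      have : ((r + 1 : ℕ) : ℝ) ≠ 0 := by positivity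
      field_simp
      ring
  -- mass bound invariant
  have hmass : ∀ r, ρ ≤ r → r ≤ k →
      ∑ i ∈ Finset.Icc 1 r, s' i + (g r - t r) / r ≤ ∑ i ∈ Finset.Icc 1 r, s i := by
    intro r hr
    induction r, hr using Nat.le_induction with
    | base =>
      intro _
      have hsplit : ∑ i ∈ Finset.Icc 1 ρ, s' i
          = ∑ i ∈ Finset.Icc 1 (ρ - 1), s' i + s' ρ := by
        obtain ⟨m, rfl⟩ : ∃ m, ρ = m + 1 := ⟨ρ - 1, by omega⟩
        rw [Finset.sum_Icc_succ_top (by omega : 1 ≤ m + 1)]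
        simp
      rw [hsplit, Finset.sum_eq_zero, hs'ρ]
      · have hgρ : g ρ = (ρ : ℝ) * ∑ i ∈ Finset.Icc 1 ρ, s i := by
          simp only [hgdef]
          rw [Finset.Icc_eq_empty (by omega : ¬ ρ + 1 ≤ ρ)]
          simp
        rw [hgρ]
        field_simp
        linarith
      · intro i hi
        rw [Finset.mem_Icc] at hi
        exact hs'lt i (by omega)
    | succ r hr ih =>
      intro hrk
      have ih' := ih (by omega)
      rw [Finset.sum_Icc_succ_top (by omega : 1 ≤ r + 1),
        Finset.sum_Icc_succ_top (by omega : 1 ≤ r + 1),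
        hs'gt (r + 1) (by omega)]
      simp only [Nat.add_sub_cancel]
      have hDr : 0 ≤ g r - t r := by linarith [htg r]
      have hgs := hgstep r (by omega)
      have hrpos : (0:ℝ) < (r:ℝ) := by
        have : (0:ℝ) < (ρ:ℝ) := hρR
        have : (ρ:ℝ) ≤ (r:ℝ) := by exact_mod_cast hr
        linarith
      have hr1pos : (0:ℝ) < ((r+1:ℕ):ℝ) := by positivity
      -- key step inequality
      have key : (t (r+1) - t r) / ((r+1:ℕ):ℝ) + (g (r+1) - t (r+1)) / ((r+1:ℕ):ℝ)
          ≤ s (r+1) + (g r - t r) / (r:ℝ) := by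
        have e1 : (t (r+1) - t r) / ((r+1:ℕ):ℝ) + (g (r+1) - t (r+1)) / ((r+1:ℕ):ℝ)
            = (g (r+1) - t r) / ((r+1:ℕ):ℝ) := by ring
        rw [e1, hgs]
        have e2 : (g r + ((r+1:ℕ):ℝ) * s (r+1) - t r) / ((r+1:ℕ):ℝ)
            = s (r+1) + (g r - t r) / ((r+1:ℕ):ℝ) := by
          field_simp
          ring
        rw [e2]
        have : (g r - t r) / ((r+1:ℕ):ℝ) ≤ (g r - t r) / (r:ℝ) := by
          apply div_le_div_of_nonneg_left hDr hrpos
          push_cast; linarith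
        linarith
      linarith
  -- t τ ≤ τ²/4
  have htcap : ∀ τ, t τ ≤ (τ : ℝ) ^ 2 / 4 := fun τ => min_le_left _ _
  -- A_r ≤ g r
  have hAg : ∀ r, ρ ≤ r → r ≤ k → ∑ i ∈ Finset.Icc 1 r, (i : ℝ) * s i ≤ g r := by
    intro r hr hrk
    have hsplit : ∑ i ∈ Finset.Icc 1 r, (i : ℝ) * s i
        = ∑ i ∈ Finset.Icc 1 ρ, (i : ℝ) * s i + ∑ i ∈ Finset.Icc (ρ + 1) r, (i : ℝ) * s i := by
      rw [show Finset.Icc 1 r = Finset.Ioc 0 r from by rw [← Finset.Icc_add_one_left_eq_Ioc, zero_add],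
        show Finset.Icc 1 ρ = Finset.Ioc 0 ρ from by rw [← Finset.Icc_add_one_left_eq_Ioc, zero_add],
        show Finset.Icc (ρ+1) r = Finset.Ioc ρ r from by rw [← Finset.Icc_add_one_left_eq_Ioc],
        ← Finset.sum_Ioc_consecutive _ (by omega : 0 ≤ ρ) (by omega : ρ ≤ r)]
    rw [hsplit]
    simp only [hgdef]
    have : ∑ i ∈ Finset.Icc 1 ρ, (i : ℝ) * s i ≤ (ρ : ℝ) * ∑ i ∈ Finset.Icc 1 ρ, s i := by
      rw [Finset.mul_sum]
      apply Finset.sum_le_sum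
      intro i hi
      rw [Finset.mem_Icc] at hi
      have : 0 ≤ s i := hsnn i hi.1 (le_trans hi.2 hρk)
      have : (i:ℝ) ≤ (ρ:ℝ) := by exact_mod_cast hi.2
      nlinarith [hsnn i hi.1 (le_trans hi.2 hρk)]
    linarith
  refine ⟨s', ?_, ?_, ?_, ?_, ?_⟩
  · intro i hi
    rw [Finset.mem_Icc] at hi
    exact hs'nn i hi.2
  · have h1 := hmass k hρk le_rfl
    have hDk : 0 ≤ (g k - t k) / (k : ℝ) := by
      have : 0 ≤ g k - t k := by linarith [htg k]
      have : (0:ℝ) ≤ (k:ℝ) := by positivity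
      positivity
    linarith
  · intro i _ hilt
    exact hs'lt i hilt
  · intro τ hτ
    rw [Finset.mem_Icc] at hτ
    rw [hA' τ hτ.1 hτ.2]
    exact htcap τ
  · unfold phi
    apply Finset.sum_le_sum
    intro r hr
    rw [Finset.mem_Icc] at hr
    rw [hA' r hr.1 hr.2]
    have h1 : min ((r:ℝ)^2/4) (∑ i ∈ Finset.Icc 1 r, (i : ℝ) * s i) ≤ t r :=
      min_le_min le_rfl (hAg r hr.1 hr.2)
    have h2 : min ((r:ℝ)^2/4) (t r) = t r := min_eq_right (htcap r)
    rw [h2]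
    exact h1
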